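/- arXiv:2402.00315 — 4 statements merged into one kernel-verified Lean document; each statement's English description precedes it below -/
import Mathlib

section
/- Let Y = [M], let f_1,...,f_K be probability distributions on Y, and let T ≥ 2 be an integer. Set N' = ∑_{y∈Y} ⌈M·max_{j∈[K]} f_j[y]⌉, fix a partition {S_y}_{y∈Y} of [N'] with |S_y| = ⌈M·max_{j∈[K]} f_j[y]⌉, and for each j define the distribution h∘f_j on [N'] by (h∘f_j)[y'] = (1−1/T)·f_j[y]/|S_y| + 1/(T·N') for y' ∈ S_y. Then M ≤ N' ≤ (K+1)·M, and consequently 1/(T·(K+1)·M) ≤ (h∘f_j)[y'] ≤ 1/M for every j ∈ [K] and every y' ∈ [N']. In particular, each log-likelihood map y' ↦ log((h∘f_j)[y']) has range contained in an interval of length log((K+1)·T). -/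
open Finset

/-- `p` is a probability distribution on the finite set `Y`. -/
def IsDist {Y : Type*} [Fintype Y] (p : Y → ℝ) : Prop :=
  (∀ y, 0 ≤ p y) ∧ ∑ y, p y = 1

/-- **Bounds for the clipping construction.**
Let `f 1, …, f K` be distributions on `[M]`, let `N' = ∑_y ⌈M · max_j f j y⌉`, let
`{S y}_{y}` be a partition of `[N']` into blocks with `|S y| = ⌈M · max_j f j y⌉`, and let
`g j` be the clipped distribution `h ∘ f j` on `[N']`, i.e.
`g j y' = (1 − 1/T) · f j y / |S y| + 1/(T·N')` for `y' ∈ S y`.  Then `M ≤ N' ≤ (K+1)·M`,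
consequently `1/(T·(K+1)·M) ≤ g j y' ≤ 1/M` for every `j` and `y'`, and in particular each
log-likelihood map `y' ↦ log (g j y')` has range contained in an interval of length
`log((K+1)·T)`. -/
theorem clipping_bounds (M K T : ℕ) (hM : 1 ≤ M) (hK : 1 ≤ K) (hT : 2 ≤ T)
    (f : Fin K → Fin M → ℝ) (hf : ∀ j, IsDist (f j))
    (N' : ℕ) (hN' : N' = ∑ y : Fin M, ⌈(M : ℝ) * ⨆ j, f j y⌉₊)
    (S : Fin M → Finset (Fin N'))
    (hScard : ∀ y, (S y).card = ⌈(M : ℝ) * ⨆ j, f j y⌉₊)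
    (hSdisj : ∀ y y', y ≠ y' → Disjoint (S y) (S y'))
    (hScover : ∀ v : Fin N', ∃ y, v ∈ S y)
    (g : Fin K → Fin N' → ℝ)
    (hg : ∀ j y v, v ∈ S y →
      g j v = (1 - 1 / (T : ℝ)) * f j y / (S y).card + 1 / ((T : ℝ) * N')) :
    M ≤ N' ∧ N' ≤ (K + 1) * M ∧
    (∀ j v, 1 / ((T : ℝ) * (K + 1) * M) ≤ g j v ∧ g j v ≤ 1 / (M : ℝ)) ∧
    (∀ j v v', Real.log (g j v) - Real.log (g j v') ≤ Real.log (((K : ℝ) + 1) * T)) := by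

  have hT1 : (1:ℝ) ≤ T := by exact_mod_cast le_trans (by norm_num) hT
  have hTpos : (0:ℝ) < T := by positivity
  have hMpos : (0:ℝ) < M := by exact_mod_cast hM
  haveI : Nonempty (Fin K) := ⟨⟨0, hK⟩⟩
  have hfnn : ∀ (j : Fin K) y, 0 ≤ f j y := fun j y => (hf j).1 y
  have hsup_ge : ∀ (j : Fin K) y, f j y ≤ ⨆ i, f i y := fun j y =>
    le_ciSup (Set.Finite.bddAbove (Set.finite_range (fun i => f i y))) j
  have hsup_nonneg : ∀ y, 0 ≤ ⨆ i, f i y := fun y =>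
    le_trans (hfnn ⟨0, hK⟩ y) (hsup_ge _ y)
  have hsup_le_sum : ∀ y, (⨆ i, f i y) ≤ ∑ j, f j y := fun y =>
    ciSup_le fun j => Finset.single_le_sum (fun i _ => hfnn i y) (mem_univ j)
  -- M ≤ N'
  have hMN : M ≤ N' := by
    have h : (M:ℝ) ≤ (N':ℝ) := by
      rw [hN']
      push_cast
      calc (M:ℝ) = ∑ y : Fin M, (M:ℝ) * f ⟨0, hK⟩ y := by
            rw [← Finset.mul_sum, (hf _).2, mul_one]
        _ ≤ ∑ y : Fin M, ((⌈(M : ℝ) * ⨆ j, f j y⌉₊ : ℕ) : ℝ) := by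
            refine Finset.sum_le_sum fun y _ => le_trans ?_ (Nat.le_ceil _)
            exact mul_le_mul_of_nonneg_left (hsup_ge _ y) (le_of_lt hMpos)
    exact_mod_cast h
  have hN'pos : (0:ℝ) < N' := lt_of_lt_of_le hMpos (by exact_mod_cast hMN)
  -- N' ≤ (K+1) M
  have hNK : N' ≤ (K + 1) * M := by
    have h : (N':ℝ) ≤ ((K:ℝ) + 1) * M := by
      rw [hN']
      push_cast
      calc ∑ y : Fin M, ((⌈(M : ℝ) * ⨆ j, f j y⌉₊ : ℕ) : ℝ)
          ≤ ∑ y : Fin M, ((M:ℝ) * ∑ j, f j y + 1) := by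
            refine Finset.sum_le_sum fun y _ => ?_
            have h1 : (⌈(M : ℝ) * ⨆ j, f j y⌉₊ : ℝ) < (M:ℝ) * (⨆ j, f j y) + 1 :=
              Nat.ceil_lt_add_one (mul_nonneg (le_of_lt hMpos) (hsup_nonneg y))
            have h2 : (M:ℝ) * (⨆ j, f j y) ≤ (M:ℝ) * ∑ j, f j y :=
              mul_le_mul_of_nonneg_left (hsup_le_sum y) (le_of_lt hMpos)
            linarith
        _ = (M:ℝ) * ∑ y : Fin M, ∑ j, f j y + M := by
            rw [Finset.sum_add_distrib, ← Finset.mul_sum]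
            simp
        _ = ((K:ℝ) + 1) * M := by
            rw [Finset.sum_comm]
            have : ∑ j : Fin K, ∑ y, f j y = (K:ℝ) := by
              rw [Finset.sum_congr rfl fun j _ => (hf j).2]; simp
            rw [this]; ring
    exact_mod_cast h
  have hbounds : ∀ j v, 1 / ((T : ℝ) * (K + 1) * M) ≤ g j v ∧ g j v ≤ 1 / (M : ℝ) := by
    intro j v
    obtain ⟨y, hv⟩ := hScover v
    rw [hg j y v hv]
    have hcardpos : 0 < (S y).card := Finset.card_pos.2 ⟨v, hv⟩
    have hcardR : (0:ℝ) < (S y).card := by exact_mod_cast hcardpos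
    have hcard_ge : (M:ℝ) * f j y ≤ (S y).card := by
      rw [hScard y]
      exact le_trans (mul_le_mul_of_nonneg_left (hsup_ge j y) (le_of_lt hMpos)) (Nat.le_ceil _)
    have hTinv : 1 - 1 / (T:ℝ) ≥ 0 := by
      have : 1 / (T:ℝ) ≤ 1 := by rw [div_le_one hTpos]; exact hT1
      linarith
    constructor
    · have h1 : 0 ≤ (1 - 1 / (T : ℝ)) * f j y / (S y).card := div_nonneg (mul_nonneg hTinv (hfnn j y)) (le_of_lt hcardR)
      have h2 : 1 / ((T : ℝ) * (K + 1) * M) ≤ 1 / ((T : ℝ) * N') := by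
        apply one_div_le_one_div_of_le (by positivity)
        have : (N':ℝ) ≤ ((K:ℝ)+1) * M := by exact_mod_cast hNK
        calc (T:ℝ) * N' ≤ (T:ℝ) * (((K:ℝ)+1) * M) :=
              mul_le_mul_of_nonneg_left this (le_of_lt hTpos)
          _ = (T:ℝ) * ((K:ℝ)+1) * M := by ring
      linarith
    · have h1 : (1 - 1 / (T : ℝ)) * f j y / (S y).card ≤ (1 - 1 / (T:ℝ)) * (1 / M) := by
        rw [mul_div_assoc]
        apply mul_le_mul_of_nonneg_left _ hTinv
        rw [div_le_div_iff₀ hcardR hMpos]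
        linarith [hcard_ge]
      have h2 : 1 / ((T : ℝ) * N') ≤ 1 / (T:ℝ) * (1 / M) := by
        rw [← one_div_mul_one_div]
        apply mul_le_mul_of_nonneg_left _ (by positivity)
        apply one_div_le_one_div_of_le hMpos
        exact_mod_cast hMN
      calc (1 - 1 / (T : ℝ)) * f j y / (S y).card + 1 / ((T : ℝ) * N')
          ≤ (1 - 1 / (T:ℝ)) * (1 / M) + 1 / (T:ℝ) * (1 / M) := add_le_add h1 h2
        _ = 1 / M := by ring
  refine ⟨hMN, hNK, hbounds, ?_⟩
  intro j v v'
  obtain ⟨hl, hu⟩ := hbounds j v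
  obtain ⟨hl', hu'⟩ := hbounds j v'
  have hdpos : (0:ℝ) < 1 / ((T : ℝ) * (K + 1) * M) := by positivity
  have hgpos : 0 < g j v := lt_of_lt_of_le hdpos hl
  have hgpos' : 0 < g j v' := lt_of_lt_of_le hdpos hl'
  rw [← Real.log_div (ne_of_gt hgpos) (ne_of_gt hgpos')]
  apply Real.log_le_log (by positivity)
  calc g j v / g j v' ≤ (1 / M) / (1 / ((T : ℝ) * (K + 1) * M)) :=
        div_le_div₀ (by positivity) hu hdpos hl'
    _ = ((K : ℝ) + 1) * T := by field_simp
end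

section
/- Let S be a finite set of size N, let T > 1 be a real number, let u be the uniform distribution on S, let p and q be probability distributions on S with q[y] > 0 for all y, and set p' = (1 − 1/T)·p + (1/T)·u. Suppose R ≥ 1 satisfies 1/R ≤ p'[y]/q[y] ≤ R for all y ∈ S. Then KL(p, q) ≤ KL(p', q) + (2·log R)/T − log(1 − 1/T). -/
open Finset

/-- Kullback–Leibler divergence between distributions on a finite set
(real-valued formula, with the convention `0 · log 0 = 0`). -/
noncomputable def klR {Y : Type*} [Fintype Y] (p q : Y → ℝ) : ℝ :=
  ∑ y, p y * Real.log (p y / q y)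

/-- **KL divergence versus uniform smoothing.**
Let `S` be a finite set of size `N`, `T > 1` a real number, `u` the uniform distribution on
`S`, and `p' = (1 − 1/T)·p + (1/T)·u`.  If `1/R ≤ p'[y]/q[y] ≤ R` for all `y` (with `R ≥ 1`
and `q` everywhere positive), then
`KL(p, q) ≤ KL(p', q) + (2 log R)/T − log(1 − 1/T)`. -/
theorem kl_uniform_smoothing {S : Type*} [Fintype S] (T R : ℝ) (hT : 1 < T) (hR : 1 ≤ R)
    (p q p' : S → ℝ) (hp : IsDist p) (hq : IsDist q) (hq0 : ∀ y, 0 < q y)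
    (hp' : ∀ y, p' y = (1 - 1 / T) * p y + (1 / T) * (1 / (Fintype.card S : ℝ)))
    (hratio : ∀ y, 1 / R ≤ p' y / q y ∧ p' y / q y ≤ R) :
    klR p q ≤ klR p' q + 2 * Real.log R / T - Real.log (1 - 1 / T) := by
  classical
  obtain ⟨hp0, hp1⟩ := hp
  obtain ⟨hq0', hq1⟩ := hq
  have hne : Nonempty S := by
    by_contra h
    rw [not_nonempty_iff] at h
    simp [Finset.univ_eq_empty] at hq1
  have hNpos : (0:ℝ) < (Fintype.card S : ℝ) := by
    have := Fintype.card_pos (α := S)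
    exact_mod_cast this
  have hT0 : (0:ℝ) < T := lt_trans one_pos hT
  have hα : (0:ℝ) < 1 - 1/T := by
    have h1 : 1/T < 1 := by rw [div_lt_one hT0]; exact hT
    linarith
  have hp'pos : ∀ y, 0 < p' y := by
    intro y
    rw [hp' y]
    have h1 : 0 ≤ (1 - 1/T) * p y := mul_nonneg hα.le (hp0 y)
    have h2 : 0 < (1/T) * (1/(Fintype.card S : ℝ)) := by positivity
    linarith
  have hlogub : ∀ y, Real.log (p' y / q y) ≤ Real.log R :=
    fun y => Real.log_le_log (div_pos (hp'pos y) (hq0 y)) (hratio y).2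
  have hloglb : ∀ y, -Real.log R ≤ Real.log (p' y / q y) := by
    intro y
    have h := Real.log_le_log (by positivity : (0:ℝ) < 1/R) (hratio y).1
    rwa [one_div, Real.log_inv] at h
  have key1 : ∀ y, p y * Real.log (p y / q y) ≤
      p y * (Real.log (p' y / q y) - Real.log (1 - 1/T)) := by
    intro y
    rcases eq_or_lt_of_le (hp0 y) with h0 | hpy
    · rw [← h0]; simp
    · have hαp : (1 - 1/T) * p y ≤ p' y := by
        rw [hp' y]
        have : 0 < (1/T) * (1/(Fintype.card S : ℝ)) := by positivity
        linarith
      have hlog := Real.log_le_log (by positivity) hαp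
      rw [Real.log_mul (ne_of_gt hα) (ne_of_gt hpy)] at hlog
      have e1 : Real.log (p y / q y) = Real.log (p y) - Real.log (q y) :=
        Real.log_div (ne_of_gt hpy) (ne_of_gt (hq0 y))
      have e2 : Real.log (p' y / q y) = Real.log (p' y) - Real.log (q y) :=
        Real.log_div (ne_of_gt (hp'pos y)) (ne_of_gt (hq0 y))
      have h : Real.log (p y / q y) ≤ Real.log (p' y / q y) - Real.log (1 - 1/T) := by
        rw [e1, e2]; linarith
      exact mul_le_mul_of_nonneg_left h (hp0 y)
  have key2 : ∀ y, p y * Real.log (p' y / q y) ≤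
      p' y * Real.log (p' y / q y)
        + (1/T) * ((p y + 1/(Fintype.card S : ℝ)) * Real.log R) := by
    intro y
    set c := Real.log (p' y / q y) with hc
    have h1 : p y * c = p' y * c + (1/T) * ((p y - 1/(Fintype.card S : ℝ)) * c) := by
      rw [hp' y]; field_simp; ring
    have h2 : p y * c ≤ p y * Real.log R :=
      mul_le_mul_of_nonneg_left (hlogub y) (hp0 y)
    have h3 : -(1/(Fintype.card S : ℝ) * c) ≤ 1/(Fintype.card S : ℝ) * Real.log R := by
      have h := hloglb y
      have hN : (0:ℝ) ≤ 1/(Fintype.card S : ℝ) := by positivity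
      nlinarith
    have h4 : (p y - 1/(Fintype.card S : ℝ)) * c ≤
        (p y + 1/(Fintype.card S : ℝ)) * Real.log R := by nlinarith
    have hTp : (0:ℝ) ≤ 1/T := by positivity
    have h5 := mul_le_mul_of_nonneg_left h4 hTp
    linarith [h1, h5]
  have hsumu : ∑ _y : S, (1/(Fintype.card S : ℝ)) = 1 := by
    rw [Finset.sum_const, Finset.card_univ, nsmul_eq_mul]
    field_simp
  have step2 : ∑ y, p y * Real.log (p' y / q y) ≤ klR p' q + 2 * Real.log R / T := by
    calc ∑ y, p y * Real.log (p' y / q y)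
        ≤ ∑ y, (p' y * Real.log (p' y / q y)
            + (1/T) * ((p y + 1/(Fintype.card S : ℝ)) * Real.log R)) :=
          Finset.sum_le_sum (fun y _ => key2 y)
      _ = klR p' q + (1/T) * (((∑ y, p y) + ∑ _y : S, (1/(Fintype.card S : ℝ))) * Real.log R) := by
          rw [Finset.sum_add_distrib, ← Finset.mul_sum, klR]
          congr 2
          rw [← Finset.sum_mul, Finset.sum_add_distrib]
      _ = klR p' q + 2 * Real.log R / T := by
          rw [hp1, hsumu]; ring
  have step1 : klR p q ≤ ∑ y, p y * Real.log (p' y / q y) - Real.log (1 - 1/T) := by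
    calc klR p q ≤ ∑ y, p y * (Real.log (p' y / q y) - Real.log (1 - 1/T)) :=
          Finset.sum_le_sum (fun y _ => key1 y)
      _ = ∑ y, p y * Real.log (p' y / q y) - (∑ y, p y) * Real.log (1 - 1/T) := by
          rw [Finset.sum_mul, ← Finset.sum_sub_distrib]
          exact Finset.sum_congr rfl (fun y _ => by ring)
      _ = _ := by rw [hp1, one_mul]
  linarith [step1, step2]
end

section
/- Let p_1, p_2, q be probability distributions on a finite set Y, with q[y] > 0 whenever p_1[y] + p_2[y] > 0. Then max{ KL(p_1, q), KL(p_2, q) } ≥ (1/2)·KL(p_1, (p_1 + p_2)/2). -/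
open Finset

/-- Gibbs' inequality: KL is nonnegative. -/
lemma klR_nonneg {Y : Type*} [Fintype Y] {p r : Y → ℝ}
    (hp0 : ∀ y, 0 ≤ p y) (hps : ∑ y, p y = 1)
    (hr0 : ∀ y, 0 ≤ r y) (hrs : ∑ y, r y ≤ 1)
    (hsupp : ∀ y, 0 < p y → 0 < r y) : 0 ≤ klR p r := by
  have key : ∀ y, p y - r y ≤ p y * Real.log (p y / r y) := by
    intro y
    rcases eq_or_lt_of_le (hp0 y) with h0 | h0
    · rw [← h0]
      simp only [zero_mul, zero_sub]
      linarith [hr0 y]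
    · have hr : 0 < r y := hsupp y h0
      have hlog : Real.log (r y / p y) ≤ r y / p y - 1 :=
        Real.log_le_sub_one_of_pos (by positivity)
      have hneg : Real.log (p y / r y) = - Real.log (r y / p y) := by
        rw [← Real.log_inv]; congr 1; field_simp
      have hmul := mul_le_mul_of_nonneg_left hlog h0.le
      have hfield : p y * (r y / p y - 1) = r y - p y := by field_simp
      rw [hfield] at hmul
      rw [hneg]
      linarith
  have hsum : ∑ y, (p y - r y) ≤ klR p r := Finset.sum_le_sum (fun y _ => key y)
  rw [Finset.sum_sub_distrib, hps] at hsum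
  linarith

/-- **Two-point KL lower bound (Le Cam style).**
If `q` is positive wherever `p₁ + p₂` is, then no `q` can be simultaneously KL-close to both
`p₁` and `p₂`: the larger of the two divergences is at least half the divergence of `p₁` from
the equal mixture `(p₁ + p₂)/2`. -/
theorem kl_two_point {Y : Type*} [Fintype Y] (p₁ p₂ q : Y → ℝ)
    (h₁ : IsDist p₁) (h₂ : IsDist p₂) (hq : IsDist q)
    (hsupp : ∀ y, 0 < p₁ y + p₂ y → 0 < q y) :
    (1 / 2) * klR p₁ (fun y => (p₁ y + p₂ y) / 2) ≤ max (klR p₁ q) (klR p₂ q) := by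
  set m : Y → ℝ := fun y => (p₁ y + p₂ y) / 2 with hm
  have hm0 : ∀ y, 0 ≤ m y := fun y => by
    have := h₁.1 y; have := h₂.1 y; simp only [hm]; positivity
  have hms : ∑ y, m y = 1 := by
    simp only [hm]
    rw [show (fun y => (p₁ y + p₂ y) / 2) = fun y => p₁ y / 2 + p₂ y / 2 by
      funext y; ring]
    rw [Finset.sum_add_distrib, ← Finset.sum_div, ← Finset.sum_div, h₁.2, h₂.2]
    norm_num
  -- chain rule identity
  have key : klR p₁ q + klR p₂ q = klR p₁ m + klR p₂ m + 2 * klR m q := by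
    unfold klR
    rw [← Finset.sum_add_distrib, Finset.mul_sum, ← Finset.sum_add_distrib,
        ← Finset.sum_add_distrib]
    apply Finset.sum_congr rfl
    intro y _
    rcases eq_or_lt_of_le (h₁.1 y) with ha | ha <;>
      rcases eq_or_lt_of_le (h₂.1 y) with hb | hb
    · simp only [hm]
      rw [← ha, ← hb]
      norm_num
    · have hmy : 0 < (p₁ y + p₂ y) / 2 := by have := h₁.1 y; linarith
      have hc : 0 < q y := hsupp y (by have := h₁.1 y; linarith)
      simp only [hm]
      rw [← ha]
      simp only [zero_mul, zero_add]
      have hmy' : (p₂ y / 2 : ℝ) ≠ 0 := by positivity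
      rw [Real.log_div hb.ne' hc.ne', Real.log_div hb.ne' hmy',
          Real.log_div hmy' hc.ne']
      ring
    · have hmy : 0 < (p₁ y + p₂ y) / 2 := by have := h₂.1 y; linarith
      have hc : 0 < q y := hsupp y (by have := h₂.1 y; linarith)
      simp only [hm]
      rw [← hb]
      simp only [zero_mul, add_zero]
      have hmy' : (p₁ y / 2 : ℝ) ≠ 0 := by positivity
      rw [Real.log_div ha.ne' hc.ne', Real.log_div ha.ne' hmy',
          Real.log_div hmy' hc.ne']
      ring
    · have hmy : 0 < (p₁ y + p₂ y) / 2 := by linarith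
      have hc : 0 < q y := hsupp y (by linarith)
      simp only [hm]
      rw [Real.log_div ha.ne' hc.ne', Real.log_div hb.ne' hc.ne',
          Real.log_div ha.ne' hmy.ne', Real.log_div hb.ne' hmy.ne',
          Real.log_div hmy.ne' hc.ne']
      ring
  have h2m : 0 ≤ klR p₂ m :=
    klR_nonneg h₂.1 h₂.2 hm0 (le_of_eq hms) (fun y hy => by
      simp only [hm]; linarith [h₁.1 y])
  have hmq : 0 ≤ klR m q :=
    klR_nonneg hm0 hms hq.1 (le_of_eq hq.2) (fun y hy => hsupp y (by
      simp only [hm] at hy; linarith))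
  have h1 := le_max_left (klR p₁ q) (klR p₂ q)
  have h2 := le_max_right (klR p₁ q) (klR p₂ q)
  linarith
end

section
/- Let N be an even positive integer, let A ⊆ [N] with |A| = N/2, and let 0 ≤ a ≤ 1. Define probability distributions p_1 and p_2 on [N] by p_1[y] = 2/N for y ∈ A and p_1[y] = 0 for y ∉ A; p_2[y] = (2−a)/N for y ∈ A and p_2[y] = a/N for y ∉ A. Then KL(p_1, (p_1+p_2)/2) = log(4/(4−a)), and consequently for every probability distribution q on [N] (with q[y] > 0 for all y ∈ [N]), max{ KL(p_1, q), KL(p_2, q) } ≥ a/16. -/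
open Finset

lemma gibbs_point {p m : ℝ} (hp : 0 ≤ p) (hm : 0 ≤ m) (h : p ≠ 0 → m ≠ 0) :
    p - m ≤ p * Real.log (p / m) := by
  rcases eq_or_lt_of_le hp with rfl | h0
  · simp; linarith
  · have hm' : 0 < m := lt_of_le_of_ne hm (Ne.symm (h h0.ne'))
    have hlog := Real.log_le_sub_one_of_pos (div_pos hm' h0)
    have h1 : p * Real.log (m / p) ≤ p * (m / p - 1) :=
      mul_le_mul_of_nonneg_left hlog h0.le
    have h2 : p * (m / p - 1) = m - p := by field_simp
    have h3 : Real.log (p / m) = - Real.log (m / p) := by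
      rw [← Real.log_inv, inv_div]
    rw [h3]; nlinarith

lemma log_shift {p m q : ℝ} (hq : q ≠ 0) (h : p ≠ 0 → m ≠ 0) :
    p * Real.log (p / q) = p * Real.log (p / m) + p * Real.log (m / q) := by
  rcases eq_or_ne p 0 with rfl | hp0
  · simp
  · have hm := h hp0
    rw [Real.log_div hp0 hq, Real.log_div hp0 hm, Real.log_div hm hq]; ring

/-- **The hard pair of distributions in the lower-bound construction.**
For `A ⊆ [N]` of size `N/2` and `0 ≤ a ≤ 1`, let `p₁` be uniform on `A` and let
`p₂[y] = (2−a)/N` on `A` and `a/N` off `A`.  Then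
`KL(p₁, (p₁+p₂)/2) = log(4/(4−a))`, and consequently every everywhere-positive distribution
`q` satisfies `max{KL(p₁,q), KL(p₂,q)} ≥ a/16`. -/
theorem hard_pair (N : ℕ) (hN : 0 < N) (hNeven : Even N)
    (A : Finset (Fin N)) (hA : A.card = N / 2)
    (a : ℝ) (ha : a ∈ Set.Icc (0 : ℝ) 1)
    (p₁ p₂ : Fin N → ℝ)
    (hp₁ : ∀ y, p₁ y = if y ∈ A then 2 / (N : ℝ) else 0)
    (hp₂ : ∀ y, p₂ y = if y ∈ A then (2 - a) / (N : ℝ) else a / (N : ℝ)) :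
    klR p₁ (fun y => (p₁ y + p₂ y) / 2) = Real.log (4 / (4 - a)) ∧
    ∀ q : Fin N → ℝ, IsDist q → (∀ y, 0 < q y) →
      a / 16 ≤ max (klR p₁ q) (klR p₂ q) := by
  obtain ⟨ha0, ha1⟩ := ha
  obtain ⟨k, hk⟩ := hNeven
  have hk0 : 0 < k := by omega
  have hAk : A.card = k := by omega
  have hNR : (N : ℝ) = 2 * k := by rw [hk]; push_cast; ring
  have hkR : (0:ℝ) < k := by exact_mod_cast hk0
  have hNpos : (0:ℝ) < N := by rw [hNR]; linarith
  set m : Fin N → ℝ := fun y => (p₁ y + p₂ y) / 2 with hmdef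
  have h2a : (0:ℝ) < 2 - a := by linarith
  have h4a : (0:ℝ) < 4 - a := by linarith
  have hp₁nn : ∀ y, 0 ≤ p₁ y := by
    intro y; rw [hp₁]; split <;> positivity
  have hp₂nn : ∀ y, 0 ≤ p₂ y := by
    intro y; rw [hp₂]; split <;> positivity
  have hmnn : ∀ y, 0 ≤ m y := by
    intro y; have := hp₁nn y; have := hp₂nn y; simp only [m]; linarith
  have hm1 : ∀ y, p₁ y ≠ 0 → m y ≠ 0 := by
    intro y h
    have h1 := lt_of_le_of_ne (hp₁nn y) (Ne.symm h)
    have := hp₂nn y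
    have : 0 < m y := by simp only [m]; linarith
    exact this.ne'
  have hm2 : ∀ y, p₂ y ≠ 0 → m y ≠ 0 := by
    intro y h
    have h1 := lt_of_le_of_ne (hp₂nn y) (Ne.symm h)
    have := hp₁nn y
    have : 0 < m y := by simp only [m]; linarith
    exact this.ne'
  have sum_split : ∀ f : Fin N → ℝ, ∑ y, f y = ∑ y ∈ A, f y + ∑ y ∈ Aᶜ, f y :=
    fun f => (Finset.sum_add_sum_compl A f).symm
  have hsum1 : ∑ y, p₁ y = 1 := by
    have e1 : ∑ y ∈ A, p₁ y = ∑ _y ∈ A, (2 / (N:ℝ)) :=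
      Finset.sum_congr rfl (fun y hy => by rw [hp₁, if_pos hy])
    have e2 : ∑ y ∈ Aᶜ, p₁ y = ∑ _y ∈ Aᶜ, (0:ℝ) :=
      Finset.sum_congr rfl (fun y hy => by rw [hp₁, if_neg (Finset.mem_compl.mp hy)])
    rw [sum_split, e1, e2, Finset.sum_const, Finset.sum_const, hAk]
    simp only [nsmul_eq_mul, smul_zero, add_zero, hNR]
    field_simp
  have hsum2 : ∑ y, p₂ y = 1 := by
    have hAcc : Aᶜ.card = k := by
      rw [Finset.card_compl, hAk, Fintype.card_fin]; omega
    have e1 : ∑ y ∈ A, p₂ y = ∑ _y ∈ A, ((2 - a) / (N:ℝ)) :=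
      Finset.sum_congr rfl (fun y hy => by rw [hp₂, if_pos hy])
    have e2 : ∑ y ∈ Aᶜ, p₂ y = ∑ _y ∈ Aᶜ, (a / (N:ℝ)) :=
      Finset.sum_congr rfl (fun y hy => by rw [hp₂, if_neg (Finset.mem_compl.mp hy)])
    rw [sum_split, e1, e2, Finset.sum_const, Finset.sum_const, hAk, hAcc]
    simp only [nsmul_eq_mul, hNR]
    field_simp
    ring
  have hsumm : ∑ y, m y = 1 := by
    simp only [m]
    rw [← Finset.sum_div, Finset.sum_add_distrib, hsum1, hsum2]
    norm_num
  have hklm : klR p₁ m = Real.log (4 / (4 - a)) := by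
    unfold klR
    rw [sum_split]
    have hA1 : ∀ y ∈ A, p₁ y * Real.log (p₁ y / m y)
        = (2 / (N:ℝ)) * Real.log (4 / (4 - a)) := by
      intro y hy
      have e1 : p₁ y = 2 / N := by rw [hp₁, if_pos hy]
      have e2 : p₂ y = (2 - a) / N := by rw [hp₂, if_pos hy]
      have e3 : p₁ y / m y = 4 / (4 - a) := by
        simp only [m]; rw [e1, e2]
        rw [div_eq_div_iff (by positivity) h4a.ne']
        field_simp
        ring
      rw [e3, e1]
    have hA2 : ∀ y ∈ Aᶜ, p₁ y * Real.log (p₁ y / m y) = 0 := by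
      intro y hy
      rw [hp₁, if_neg (Finset.mem_compl.mp hy), zero_mul]
    rw [show ∑ y ∈ A, p₁ y * Real.log (p₁ y / m y)
        = ∑ _y ∈ A, ((2 / (N:ℝ)) * Real.log (4 / (4 - a))) from Finset.sum_congr rfl hA1,
      show ∑ y ∈ Aᶜ, p₁ y * Real.log (p₁ y / m y) = ∑ _y ∈ Aᶜ, (0:ℝ)
        from Finset.sum_congr rfl hA2,
      Finset.sum_const, Finset.sum_const, hAk]
    simp only [nsmul_eq_mul, smul_zero, add_zero, hNR]
    field_simp
  refine ⟨hklm, fun q hq hqpos => ?_⟩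
  have hkl2 : 0 ≤ klR p₂ m := by
    have h := Finset.sum_le_sum (s := univ)
      (fun y _ => gibbs_point (hp₂nn y) (hmnn y) (hm2 y))
    rw [Finset.sum_sub_distrib, hsum2, hsumm, sub_self] at h
    exact h
  have point : ∀ y ∈ (univ : Finset (Fin N)),
      p₁ y * Real.log (p₁ y / m y) + p₂ y * Real.log (p₂ y / m y) + 2 * (m y - q y)
        ≤ p₁ y * Real.log (p₁ y / q y) + p₂ y * Real.log (p₂ y / q y) := by
    intro y _
    have e1 := log_shift (p := p₁ y) (m := m y) (hqpos y).ne' (hm1 y)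
    have e2 := log_shift (p := p₂ y) (m := m y) (hqpos y).ne' (hm2 y)
    have e3 : p₁ y * Real.log (m y / q y) + p₂ y * Real.log (m y / q y)
        = 2 * (m y * Real.log (m y / q y)) := by
      rw [← add_mul]
      have : p₁ y + p₂ y = 2 * m y := by simp only [m]; ring
      rw [this]; ring
    have e4 := gibbs_point (hmnn y) (hqpos y).le (fun _ => (hqpos y).ne')
    rw [e1, e2]
    linarith
  have hsums := Finset.sum_le_sum point
  rw [Finset.sum_add_distrib, Finset.sum_add_distrib, ← Finset.mul_sum,
    Finset.sum_sub_distrib, hsumm, hq.2, sub_self, mul_zero, add_zero,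
    Finset.sum_add_distrib] at hsums
  have hsums' : klR p₁ m + klR p₂ m ≤ klR p₁ q + klR p₂ q := hsums
  have hLlb : a / 4 ≤ Real.log (4 / (4 - a)) := by
    have h1 := Real.log_le_sub_one_of_pos (show (0:ℝ) < (4 - a) / 4 by linarith)
    have h2 : Real.log (4 / (4 - a)) = - Real.log ((4 - a) / 4) := by
      rw [← Real.log_inv, inv_div]
    rw [h2]; linarith
  have hmax1 := le_max_left (klR p₁ q) (klR p₂ q)
  have hmax2 := le_max_right (klR p₁ q) (klR p₂ q)
  rw [hklm] at hsums'
  linarith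
end
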